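/- Let μ be a finite measure on ℝ^M, let A be a real M×M matrix, B a real N×N matrix, C a real N×M matrix, f : ℝ^N × ℝ^M → ℝ^N, g : ℝ^M → ℝ^M, and write G(y) = A y + g(y). Let π, π^L : ℝ^M → ℝ^N be measurable with e = π^L − π and e ∘ G square-integrable with respect to μ, and define the residual r(y) = π^L(G(y)) − B π^L(y) − C y − f(π^L(y), y). Assume: (i) π satisfies the invariance equation π(G(y)) = B π(y) + C y + f(π(y), y) for μ-almost every y; (ii) there is L̄_f ≥ 0 such that for μ-almost every y the map x ↦ f(x, y) is Lipschitz on ℝ^N with constant L̄_f; (iii) there is L_G ≥ 0 with ∫ ‖e(G(y))‖² dμ(y) ≤ L_G² ∫ ‖e(y)‖² dμ(y). Then (∫ ‖r(y)‖² dμ(y))^{1/2} ≤ (L_G + ‖B‖ + L̄_f) · (∫ ‖e(y)‖² dμ(y))^{1/2}, where ‖B‖ is the operator norm of B induced by the Euclidean norm. -/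

import Mathlib

open MeasureTheory Matrix

private lemma sqrt_integral_eq_toReal {α : Type*} [MeasurableSpace α] {μ : Measure α}
    {E : Type*} [NormedAddCommGroup E] {f : α → E} (hf : MemLp f 2 μ) :
    Real.sqrt (∫ y, ‖f y‖ ^ 2 ∂μ) = (eLpNorm f 2 μ).toReal := by
  rw [hf.eLpNorm_eq_integral_rpow_norm two_ne_zero ENNReal.ofNat_ne_top]
  have h2 : (2 : ENNReal).toReal = 2 := by simp
  rw [h2]
  have hnonneg : 0 ≤ ∫ y, ‖f y‖ ^ (2:ℝ) ∂μ :=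
    integral_nonneg fun y => Real.rpow_nonneg (norm_nonneg _) _
  rw [ENNReal.toReal_ofReal (Real.rpow_nonneg hnonneg _)]
  rw [Real.sqrt_eq_rpow]
  congr 1
  · refine integral_congr_ae (Filter.Eventually.of_forall fun y => ?_)
    beta_reduce
    rw [show ((2:ℝ)) = ((2:ℕ):ℝ) by norm_num, Real.rpow_natCast]
  · norm_num

/-- `L²(μ)` bound on the residual of the invariance equation in terms of the
approximation error `e = π^L − π`:
`‖r‖_{L²} ≤ (L_G + ‖B‖ + L̄_f) ‖e‖_{L²}`. -/
theorem residual_L2_bound {M N : ℕ}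
    (μ : Measure (EuclideanSpace ℝ (Fin M))) [IsFiniteMeasure μ]
    (A : Matrix (Fin M) (Fin M) ℝ) (B : Matrix (Fin N) (Fin N) ℝ)
    (C : Matrix (Fin N) (Fin M) ℝ)
    (f : EuclideanSpace ℝ (Fin N) × EuclideanSpace ℝ (Fin M) → EuclideanSpace ℝ (Fin N))
    (g : EuclideanSpace ℝ (Fin M) → EuclideanSpace ℝ (Fin M))
    (G : EuclideanSpace ℝ (Fin M) → EuclideanSpace ℝ (Fin M))
    (hG : G = fun y => Matrix.toEuclideanCLM (𝕜 := ℝ) A y + g y)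
    (π πL : EuclideanSpace ℝ (Fin M) → EuclideanSpace ℝ (Fin N))
    (hπm : Measurable π) (hπLm : Measurable πL)
    (e : EuclideanSpace ℝ (Fin M) → EuclideanSpace ℝ (Fin N))
    (he : e = πL - π)
    (heL2 : MemLp e 2 μ) (heGL2 : MemLp (fun y => e (G y)) 2 μ)
    (r : EuclideanSpace ℝ (Fin M) → EuclideanSpace ℝ (Fin N))
    (hr : r = fun y => πL (G y) - Matrix.toEuclideanCLM (𝕜 := ℝ) B (πL y)
      - Matrix.toEuclideanLin C y - f (πL y, y))
    (hinv : ∀ᵐ y ∂μ, π (G y) = Matrix.toEuclideanCLM (𝕜 := ℝ) B (π y)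
      + Matrix.toEuclideanLin C y + f (π y, y))
    (Lf : ℝ) (hLf0 : 0 ≤ Lf)
    (hLip : ∀ᵐ y ∂μ, ∀ x₁ x₂ : EuclideanSpace ℝ (Fin N),
      ‖f (x₁, y) - f (x₂, y)‖ ≤ Lf * ‖x₁ - x₂‖)
    (LG : ℝ) (hLG0 : 0 ≤ LG)
    (hcomp : ∫ y, ‖e (G y)‖ ^ 2 ∂μ ≤ LG ^ 2 * ∫ y, ‖e y‖ ^ 2 ∂μ) :
    Real.sqrt (∫ y, ‖r y‖ ^ 2 ∂μ) ≤
      (LG + ‖Matrix.toEuclideanCLM (𝕜 := ℝ) B‖ + Lf) * Real.sqrt (∫ y, ‖e y‖ ^ 2 ∂μ) := by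
  set nB : ℝ := ‖Matrix.toEuclideanCLM (𝕜 := ℝ) B‖ with hnB
  have hnB0 : 0 ≤ nB := norm_nonneg _
  set a : EuclideanSpace ℝ (Fin M) → ℝ := fun y => ‖e (G y)‖ with ha_def
  set b : EuclideanSpace ℝ (Fin M) → ℝ := fun y => nB * ‖e y‖ with hb_def
  set c : EuclideanSpace ℝ (Fin M) → ℝ := fun y => Lf * ‖e y‖ with hc_def
  have ha : MemLp a 2 μ := heGL2.norm
  have hb : MemLp b 2 μ := heL2.norm.const_mul nB
  have hc : MemLp c 2 μ := heL2.norm.const_mul Lf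
  have hh : MemLp (fun y => a y + b y + c y) 2 μ := (ha.add hb).add hc
  set I : ℝ := ∫ y, ‖e y‖ ^ 2 ∂μ with hI
  have hI0 : 0 ≤ I := integral_nonneg fun y => sq_nonneg _
  -- pointwise a.e. bound on the residual
  have hbound : ∀ᵐ y ∂μ, ‖r y‖ ≤ a y + b y + c y := by
    filter_upwards [hinv, hLip] with y h1 h2
    have hey : e y = πL y - π y := by rw [he]; rfl
    have hry : r y = e (G y) - Matrix.toEuclideanCLM (𝕜 := ℝ) B (e y)
        - (f (πL y, y) - f (π y, y)) := by
      rw [hr]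
      simp only [he, Pi.sub_apply, h1, map_sub]
      abel
    calc ‖r y‖ ≤ ‖e (G y) - Matrix.toEuclideanCLM (𝕜 := ℝ) B (e y)‖
          + ‖f (πL y, y) - f (π y, y)‖ := by rw [hry]; exact norm_sub_le _ _
      _ ≤ ‖e (G y)‖ + ‖Matrix.toEuclideanCLM (𝕜 := ℝ) B (e y)‖
          + ‖f (πL y, y) - f (π y, y)‖ :=
            add_le_add (norm_sub_le _ _) le_rfl
      _ ≤ a y + b y + c y := by
            refine add_le_add (add_le_add le_rfl
              ((Matrix.toEuclideanCLM (𝕜 := ℝ) B).le_opNorm (e y))) ?_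
            have := h2 (πL y) (π y)
            rwa [← hey] at this
  -- step 1 : ∫‖r‖² ≤ ∫ (a+b+c)²
  have hsq_int : Integrable (fun y => (a y + b y + c y) ^ 2) μ := hh.integrable_sq
  have step1 : ∫ y, ‖r y‖ ^ 2 ∂μ ≤ ∫ y, (a y + b y + c y) ^ 2 ∂μ := by
    by_cases hint : Integrable (fun y => ‖r y‖ ^ 2) μ
    · refine integral_mono_ae hint hsq_int ?_
      filter_upwards [hbound] with y hy
      have h0 : (0:ℝ) ≤ ‖r y‖ := norm_nonneg _
      nlinarith
    · rw [integral_undef hint]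
      exact integral_nonneg fun y => sq_nonneg _
  -- step 2 : Minkowski
  have habc : ∀ y, ‖a y + b y + c y‖ ^ 2 = (a y + b y + c y) ^ 2 := fun y => by
    rw [Real.norm_eq_abs, sq_abs]
  have hsum_eq : Real.sqrt (∫ y, (a y + b y + c y) ^ 2 ∂μ)
      = (eLpNorm (fun y => a y + b y + c y) 2 μ).toReal := by
    rw [← sqrt_integral_eq_toReal hh]
    congr 1
    exact integral_congr_ae (Filter.Eventually.of_forall fun y => (habc y).symm)
  have htri : eLpNorm (fun y => a y + b y + c y) 2 μ
      ≤ eLpNorm a 2 μ + eLpNorm b 2 μ + eLpNorm c 2 μ := by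
    calc eLpNorm (fun y => a y + b y + c y) 2 μ
        ≤ eLpNorm (fun y => a y + b y) 2 μ + eLpNorm c 2 μ :=
          eLpNorm_add_le (ha.aestronglyMeasurable.add hb.aestronglyMeasurable)
            hc.aestronglyMeasurable one_le_two
      _ ≤ eLpNorm a 2 μ + eLpNorm b 2 μ + eLpNorm c 2 μ := by
          gcongr
          exact eLpNorm_add_le ha.aestronglyMeasurable hb.aestronglyMeasurable one_le_two
  have htri' : (eLpNorm (fun y => a y + b y + c y) 2 μ).toReal
      ≤ (eLpNorm a 2 μ).toReal + (eLpNorm b 2 μ).toReal + (eLpNorm c 2 μ).toReal := by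
    rw [← ENNReal.toReal_add ha.2.ne hb.2.ne,
      ← ENNReal.toReal_add (ENNReal.add_ne_top.mpr ⟨ha.2.ne, hb.2.ne⟩) hc.2.ne]
    exact ENNReal.toReal_mono (ENNReal.add_ne_top.mpr
      ⟨ENNReal.add_ne_top.mpr ⟨ha.2.ne, hb.2.ne⟩, hc.2.ne⟩) htri
  -- evaluate the three norms
  have haval : (eLpNorm a 2 μ).toReal ≤ LG * Real.sqrt I := by
    rw [← sqrt_integral_eq_toReal ha]
    have : ∫ y, ‖a y‖ ^ 2 ∂μ ≤ LG ^ 2 * I := by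
      calc ∫ y, ‖a y‖ ^ 2 ∂μ = ∫ y, ‖e (G y)‖ ^ 2 ∂μ :=
            integral_congr_ae (Filter.Eventually.of_forall fun y => by
              simp [ha_def, Real.norm_eq_abs, sq_abs])
        _ ≤ LG ^ 2 * I := hcomp
    calc Real.sqrt (∫ y, ‖a y‖ ^ 2 ∂μ) ≤ Real.sqrt (LG ^ 2 * I) := Real.sqrt_le_sqrt this
      _ = LG * Real.sqrt I := by
          rw [Real.sqrt_mul (sq_nonneg _), Real.sqrt_sq hLG0]
  have hconst : ∀ (k : ℝ), 0 ≤ k →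
      (eLpNorm (fun y => k * ‖e y‖) 2 μ).toReal = k * Real.sqrt I := by
    intro k hk
    rw [← sqrt_integral_eq_toReal (heL2.norm.const_mul k)]
    have : ∫ y, ‖k * ‖e y‖‖ ^ 2 ∂μ = k ^ 2 * I := by
      rw [hI, ← integral_const_mul]
      exact integral_congr_ae (Filter.Eventually.of_forall fun y => by
        show ‖k * ‖e y‖‖ ^ 2 = k ^ 2 * ‖e y‖ ^ 2
        rw [Real.norm_eq_abs, sq_abs, mul_pow])
    rw [this, Real.sqrt_mul (sq_nonneg _), Real.sqrt_sq hk]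
  have hbval : (eLpNorm b 2 μ).toReal = nB * Real.sqrt I := hconst nB hnB0
  have hcval : (eLpNorm c 2 μ).toReal = Lf * Real.sqrt I := hconst Lf hLf0
  calc Real.sqrt (∫ y, ‖r y‖ ^ 2 ∂μ)
      ≤ Real.sqrt (∫ y, (a y + b y + c y) ^ 2 ∂μ) := Real.sqrt_le_sqrt step1
    _ = (eLpNorm (fun y => a y + b y + c y) 2 μ).toReal := hsum_eq
    _ ≤ (eLpNorm a 2 μ).toReal + (eLpNorm b 2 μ).toReal + (eLpNorm c 2 μ).toReal := htri'
    _ ≤ LG * Real.sqrt I + nB * Real.sqrt I + Lf * Real.sqrt I := by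
        rw [hbval, hcval]; linarith [haval]
    _ = (LG + nB + Lf) * Real.sqrt I := by ring
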